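/- arXiv:2401.12814 — 2 statements merged into one kernel-verified Lean document; each statement's English description precedes it below -/
import Mathlib

section
/- Let A be a commutative ring and ℓ ≥ 0 an integer. For all elements u_1,…,u_ℓ, w_1,…,w_ℓ ∈ A one has the identity ∏_{k=1}^{ℓ} (u_k + w_k) = Σ_{J ⊆ [ℓ]} ∏_{i ∈ [ℓ]∖J} (u_i + |J ∩ [i]|) · ∏_{j ∈ J} (w_j − |J ∩ [j−1]|), where the cardinalities of the finite sets are interpreted in A via the canonical map ℕ → A. (This is Lemma 4.7 of the paper, an identity between polynomials in u_1,…,u_ℓ, w_1,…,w_ℓ.) -/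
/-- **Lemma 4.7** of the paper: for a commutative ring `A`, `ℓ ≥ 0`, and elements
`u_1, …, u_ℓ, w_1, …, w_ℓ ∈ A`, one has
`∏_{k=1}^{ℓ} (u_k + w_k)
  = Σ_{J ⊆ [ℓ]} ∏_{i ∈ [ℓ]∖J} (u_i + |J ∩ [i]|) · ∏_{j ∈ J} (w_j − |J ∩ [j−1]|)`,
where `[ℓ] = {1,…,ℓ}` and cardinalities are interpreted in `A` via `ℕ → A`. -/
theorem stmt0 (A : Type*) [CommRing A] (ℓ : ℕ) (u w : ℕ → A) :
    ∏ k ∈ Finset.Icc 1 ℓ, (u k + w k) =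
      ∑ J ∈ (Finset.Icc 1 ℓ).powerset,
        (∏ i ∈ (Finset.Icc 1 ℓ) \ J, (u i + ((J ∩ Finset.Icc 1 i).card : A))) *
          (∏ j ∈ J, (w j - ((J ∩ Finset.Icc 1 (j - 1)).card : A))) := by
  induction ℓ with
  | zero => simp
  | succ n ih =>
    have hnot : n + 1 ∉ Finset.Icc 1 n := by simp
    have hIcc : Finset.Icc 1 (n + 1) = insert (n + 1) (Finset.Icc 1 n) := by
      ext x; simp [Finset.mem_Icc]; omega
    rw [hIcc, Finset.prod_insert hnot, Finset.sum_powerset_insert hnot, ih,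
      Finset.mul_sum, ← Finset.sum_add_distrib]
    apply Finset.sum_congr rfl
    intro J hJ
    rw [Finset.mem_powerset] at hJ
    have hJn : n + 1 ∉ J := fun h => hnot (hJ h)
    -- first sum term
    have h1 : insert (n + 1) (Finset.Icc 1 n) \ J = insert (n + 1) (Finset.Icc 1 n \ J) :=
      Finset.insert_sdiff_of_notMem _ hJn
    have h1' : n + 1 ∉ Finset.Icc 1 n \ J := fun h => hnot (Finset.mem_sdiff.mp h).1
    have hJcap : J ∩ Finset.Icc 1 (n + 1) = J := by
      rw [Finset.inter_eq_left]
      exact hJ.trans (Finset.Icc_subset_Icc_right (by omega))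
    -- second sum term
    have h2 : insert (n + 1) (Finset.Icc 1 n) \ insert (n + 1) J = Finset.Icc 1 n \ J := by
      ext x
      simp only [Finset.mem_sdiff, Finset.mem_insert, Finset.mem_Icc]
      constructor
      · rintro ⟨hx1 | hx2, hx3⟩
        · exact absurd (Or.inl hx1) hx3
        · exact ⟨hx2, fun h => hx3 (Or.inr h)⟩
      · rintro ⟨hx, hxJ⟩
        exact ⟨Or.inr hx, fun h => h.elim (fun e => by omega) hxJ⟩
    have h3 : ∀ i ∈ Finset.Icc 1 n \ J,
        (insert (n + 1) J ∩ Finset.Icc 1 i) = J ∩ Finset.Icc 1 i := by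
      intro i hi
      apply Finset.insert_inter_of_notMem
      simp only [Finset.mem_sdiff, Finset.mem_Icc] at hi ⊢
      omega
    have h4 : insert (n + 1) J ∩ Finset.Icc 1 (n + 1 - 1) = J := by
      rw [show n + 1 - 1 = n from rfl, Finset.insert_inter_of_notMem hnot,
        Finset.inter_eq_left]
      exact hJ
    have h5 : ∀ j ∈ J,
        (insert (n + 1) J ∩ Finset.Icc 1 (j - 1)) = J ∩ Finset.Icc 1 (j - 1) := by
      intro j hj
      apply Finset.insert_inter_of_notMem
      have := Finset.mem_Icc.mp (hJ hj)
      simp only [Finset.mem_Icc]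
      omega
    have hp3 : (∏ i ∈ Finset.Icc 1 n \ J, (u i + ((insert (n + 1) J ∩ Finset.Icc 1 i).card : A)))
        = ∏ i ∈ Finset.Icc 1 n \ J, (u i + ((J ∩ Finset.Icc 1 i).card : A)) :=
      Finset.prod_congr rfl (fun i hi => by rw [h3 i hi])
    have hp5 : (∏ j ∈ J, (w j - ((insert (n + 1) J ∩ Finset.Icc 1 (j - 1)).card : A)))
        = ∏ j ∈ J, (w j - ((J ∩ Finset.Icc 1 (j - 1)).card : A)) :=
      Finset.prod_congr rfl (fun j hj => by rw [h5 j hj])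
    rw [h1, Finset.prod_insert h1', hJcap, h2, Finset.prod_insert hJn, h4, hp3, hp5]
    ring
end

section
/- Let n ≥ 0 be an integer and let R = ℚ[ℏ,𝔟,P_1,…,P_n]. Then the following identity of R-linear operators on R[p̃] holds, where every sum over a bridge set is locally finite (for each polynomial input only finitely many summands act nonzero): Σ_{i=0}^{n} e_{n−i}(P_1,…,P_n) · Σ_{γ ∈ Γ^{≥0}_{(0,−1)→(i+1,0)}} wt̃(γ|0) = Σ_{γ ∈ Γ^{≥0}_{(0,−1)→(n+1,0)}} wt̃(γ|(0,P_1,…,P_n)), where (0,P_1,…,P_n) is the vector of length n+1 whose first entry is 0. -/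
open MvPolynomial

noncomputable section Stmt1

/-- The coefficient ring `R = ℚ[ℏ, 𝔟, P_1, …, P_n]`. -/
abbrev RR (n : ℕ) : Type := MvPolynomial (Fin (n + 2)) ℚ

/-- The ring `R[p̃] = R[p̃_1, p̃_2, …]` (variable `k` stands for `p̃_k`; index `0` is unused). -/
abbrev PP (n : ℕ) : Type := MvPolynomial ℕ (RR n)

/-- The indeterminate `ℏ`. -/
def hb (n : ℕ) : RR n := X 0

/-- The indeterminate `𝔟`. -/
def bb (n : ℕ) : RR n := X 1

/-- The indeterminates `P_1, …, P_n` (zero-indexed). -/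
def Pv (n : ℕ) (i : Fin n) : RR n := X i.succ.succ

/-- The operators `J_k` on `R[p̃]`: `J_k = ℏ k ∂_{p̃_k}` for `k > 0`, `J_0 = 0`,
and `J_{-k} = ℏ·p̃_k` (multiplication) for `k > 0`. -/
def J (n : ℕ) (k : ℤ) : PP n → PP n :=
  if 0 < k then fun p => C (hb n) * (k.toNat : PP n) * pderiv k.toNat p
  else if k < 0 then fun p => C (hb n) * X (-k).toNat * p
  else 0

/-- The set of paths from `(x, y)` to `(x + N, y')`, encoded as the list of the `N`
successive height increments. -/
def PathSet (y : ℤ) (N : ℕ) (y' : ℤ) : Set (List ℤ) :=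
  {L | L.length = N ∧ y + L.sum = y'}

/-- The set of bridges from `(x, y)` to `(x + N, y')`: paths whose intermediate heights
`h_1, …, h_{N-1}` are all nonnegative. -/
def BridgeSet (y : ℤ) (N : ℤ) (y' : ℤ) : Set (List ℤ) :=
  {L | L ∈ PathSet y N.toNat y' ∧ ∀ j : ℕ, 0 < j → (j : ℤ) < N → 0 ≤ y + (L.take j).sum}

/-- The weight `wt̃(γ|u)` of a path: processed from the left, at (1-based) position `u`
and current height `y`, a non-flat step of increment `d` contributes the operator
`J_{-d}` (i.e. `J_{h_{j-1} - h_j}`), while a flat step contributes scalar multiplication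
by `u_j − ℏ𝔟·h_j`. The first step's operator is applied last. -/
def wtT (n : ℕ) (uvec : ℕ → RR n) : ℕ → ℤ → List ℤ → PP n → PP n
  | _, _, [] => id
  | u, y, d :: rest =>
      (if d = 0 then (fun p => C (uvec u - hb n * bb n * (y : RR n)) * p) else J n (-d)) ∘
        wtT n uvec (u + 1) (y + d) rest

/-- The elementary symmetric polynomial `e_s(P_1, …, P_n)`. -/
def esymP (n s : ℕ) : RR n :=
  ∑ t ∈ Finset.powersetCard s (Finset.univ : Finset (Fin n)), ∏ j ∈ t, Pv n j

/-- The weight vector `(0, P_1, …, P_n)` (of length `n + 1`), as a function of the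
1-based position. -/
def uvP (n : ℕ) : ℕ → RR n := fun u =>
  if h : 2 ≤ u ∧ u ≤ n + 1 then Pv n ⟨u - 2, by omega⟩ else 0


/-! ### Weighted degree machinery -/

/-- weighted degree of a monomial, variable `k` has weight `k` -/
def mwt (m : ℕ →₀ ℕ) : ℕ := m.sum fun k e => k * e

lemma mwt_add (a b : ℕ →₀ ℕ) : mwt (a + b) = mwt a + mwt b := by
  unfold mwt
  exact Finsupp.sum_add_index' (fun k => by simp) (fun k e1 e2 => by ring)

lemma mwt_single (k e : ℕ) : mwt (Finsupp.single k e) = k * e := by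
  unfold mwt
  exact Finsupp.sum_single_index (by simp)

lemma le_mwt (m : ℕ →₀ ℕ) (k : ℕ) : k * m k ≤ mwt m := by
  by_cases h : m k = 0
  · simp [h]
  · unfold mwt; rw [Finsupp.sum]
    exact Finset.single_le_sum (f := fun j => j * m j) (fun _ _ => Nat.zero_le _)
      (Finsupp.mem_support_iff.mpr h)

/-- weighted degree of an element of `PP n` -/
def wdeg {n : ℕ} (q : PP n) : ℕ := q.support.sup mwt

lemma le_wdeg {n : ℕ} {q : PP n} {m} (hm : m ∈ q.support) : mwt m ≤ wdeg q :=
  Finset.le_sup hm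

lemma wdeg_C_mul {n : ℕ} (c : RR n) (q : PP n) : wdeg (C c * q) ≤ wdeg q := by
  have hs : (C c * q).support ⊆ q.support := by
    rw [← smul_eq_C_mul]; exact support_smul
  exact Finset.sup_mono hs

lemma wdeg_X_mul {n : ℕ} (k : ℕ) (q : PP n) : wdeg (X k * q) ≤ k + wdeg q := by
  apply Finset.sup_le
  intro m hm
  rw [support_X_mul] at hm
  obtain ⟨m', hm', rfl⟩ := Finset.mem_map.mp hm
  show mwt (Finsupp.single k 1 + m') ≤ k + wdeg q
  rw [mwt_add, mwt_single]
  have := le_wdeg hm'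
  omega

lemma pderiv_eq_zero_of_lt {n : ℕ} {k : ℕ} {q : PP n} (h : wdeg q < k) :
    pderiv k q = (0 : PP n) := by
  conv_lhs => rw [q.as_sum]
  rw [map_sum]
  apply Finset.sum_eq_zero
  intro m hm
  rw [pderiv_monomial]
  have hw : mwt m ≤ wdeg q := le_wdeg hm
  have hk : k * m k ≤ mwt m := le_mwt m k
  have hmk : m k = 0 := by nlinarith
  simp [hmk]

lemma sub_single_add {k : ℕ} (m : ℕ →₀ ℕ) (h : m k ≠ 0) :
    m - Finsupp.single k 1 + Finsupp.single k 1 = m := by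
  ext j
  simp only [Finsupp.coe_add, Finsupp.coe_tsub, Pi.add_apply, Pi.sub_apply]
  rcases eq_or_ne j k with rfl | hj
  · simp only [Finsupp.single_eq_same]; omega
  · simp [Finsupp.single_eq_of_ne' (Ne.symm hj)]

lemma wdeg_pderiv {n : ℕ} {k : ℕ} {q : PP n} {m' : ℕ →₀ ℕ}
    (hm' : m' ∈ (pderiv k q).support) : mwt m' + k ≤ wdeg q := by
  classical
  have hq : pderiv k q = ∑ m ∈ q.support, monomial (m - Finsupp.single k 1)
      (coeff m q * (m k : RR n)) := by
    conv_lhs => rw [q.as_sum]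
    rw [map_sum]
    exact Finset.sum_congr rfl fun m _ => pderiv_monomial
  rw [hq] at hm'
  have := MvPolynomial.support_sum hm'
  obtain ⟨m, hm, hmem⟩ := Finset.mem_biUnion.mp this
  have h1 : m' = m - Finsupp.single k 1 ∧ (m k : RR n) ≠ 0 := by
    by_cases hz : coeff m q * (m k : RR n) = 0
    · rw [hz] at hmem; simp [support_monomial] at hmem
    · constructor
      · have := support_monomial (a := coeff m q * (m k : RR n))
          (s := m - Finsupp.single k 1) (h := Classical.dec _)
        rw [this, if_neg hz] at hmem
        exact Finset.mem_singleton.mp hmem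
      · intro h0; rw [h0, mul_zero] at hz; exact hz rfl
  obtain ⟨rfl, hne⟩ := h1
  have hk0 : m k ≠ 0 := fun h0 => hne (by rw [h0]; simp)
  have : mwt (m - Finsupp.single k 1) + k = mwt m := by
    have := mwt_add (m - Finsupp.single k 1) (Finsupp.single k 1)
    rw [sub_single_add m hk0] at this
    rw [mwt_single] at this; omega
  have := le_wdeg hm
  omega

/-! ### Step operators -/

/-- The operator applied for a step of increment `d` taken from height `h` (pre-step),
at position `u`. -/
def opS {n : ℕ} (uvec : ℕ → RR n) (u : ℕ) (h : ℤ) (d : ℤ) : PP n → PP n :=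
  if d = 0 then (fun p => C (uvec u - hb n * bb n * (h : RR n)) * p) else J n (-d)

lemma wtT_cons {n : ℕ} (uvec : ℕ → RR n) (u : ℕ) (h d : ℤ) (rest : List ℤ) (p : PP n) :
    wtT n uvec u h (d :: rest) p = opS uvec u h d (wtT n uvec (u + 1) (h + d) rest p) := rfl

lemma wtT_nil {n : ℕ} (uvec : ℕ → RR n) (u : ℕ) (h : ℤ) (p : PP n) :
    wtT n uvec u h [] p = p := rfl

lemma J_zero {n : ℕ} (k : ℤ) : J n k 0 = 0 := by
  unfold J
  split
  · simp
  · split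
    · simp
    · rfl

lemma J_add {n : ℕ} (k : ℤ) (a b : PP n) : J n k (a + b) = J n k a + J n k b := by
  unfold J
  split
  · simp [mul_add]
  · split
    · simp [mul_add]
    · show (0:PP n → PP n) (a+b) = (0:PP n → PP n) a + (0:PP n → PP n) b
      simp

lemma J_C_mul {n : ℕ} (k : ℤ) (c : RR n) (a : PP n) :
    J n k (C c * a) = C c * J n k a := by
  unfold J
  split
  · show C (hb n) * _ * pderiv _ (C c * a) = _
    rw [pderiv_C_mul]; ring
  · split
    · show C (hb n) * X _ * (C c * a) = _
      ring
    · simp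

lemma opS_zero {n : ℕ} (uvec : ℕ → RR n) (u : ℕ) (h d : ℤ) : opS uvec u h d 0 = 0 := by
  unfold opS; split
  · simp
  · exact J_zero _

lemma opS_add {n : ℕ} (uvec : ℕ → RR n) (u : ℕ) (h d : ℤ) (a b : PP n) :
    opS uvec u h d (a + b) = opS uvec u h d a + opS uvec u h d b := by
  unfold opS; split
  · ring
  · exact J_add _ _ _

lemma opS_C_mul {n : ℕ} (uvec : ℕ → RR n) (u : ℕ) (h d : ℤ) (c : RR n) (a : PP n) :
    opS uvec u h d (C c * a) = C c * opS uvec u h d a := by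
  unfold opS; split
  · ring
  · exact J_C_mul _ _ _

lemma opS_ne {n : ℕ} (uvec uvec' : ℕ → RR n) (u u' : ℕ) (h : ℤ) {d : ℤ} (hd : d ≠ 0) :
    opS uvec u h d = opS uvec' u' h d := by
  unfold opS; rw [if_neg hd, if_neg hd]

/-- bundled version, for `map_sum` -/
def opH {n : ℕ} (uvec : ℕ → RR n) (u : ℕ) (h d : ℤ) : PP n →+ PP n :=
  AddMonoidHom.mk' (opS uvec u h d) (opS_add uvec u h d)

lemma opS_sum {n : ℕ} (uvec : ℕ → RR n) (u : ℕ) (h d : ℤ) {α : Type*} (s : Finset α)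
    (f : α → PP n) : opS uvec u h d (∑ x ∈ s, f x) = ∑ x ∈ s, opS uvec u h d (f x) :=
  map_sum (opH uvec u h d) f s

/-- the weight with the zero `u`-vector does not depend on the position counter. -/
lemma wtT_zero_u {n : ℕ} : ∀ (L : List ℤ) (u u' : ℕ) (h : ℤ),
    wtT n (fun _ => 0) u h L = wtT n (fun _ => 0) u' h L := by
  intro L
  induction L with
  | nil => intro u u' h; rfl
  | cons d rest ih =>
    intro u u' h
    funext p
    rw [wtT_cons, wtT_cons, ih (u+1) (u'+1) (h+d)]
    rcases eq_or_ne d 0 with rfl | hd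
    · rfl
    · rw [opS_ne _ _ u u' h hd]

/-! ### The support bound -/

lemma J_up {n : ℕ} {d : ℤ} (hd : 0 < d) (q : PP n) :
    J n (-d) q = C (hb n) * (X d.toNat * q) := by
  unfold J
  rw [if_neg (by omega), if_pos (by omega), neg_neg, mul_assoc]

lemma J_down {n : ℕ} {d : ℤ} (hd : d < 0) (q : PP n) :
    J n (-d) q = C (hb n * ((-d).toNat : RR n)) * pderiv (-d).toNat q := by
  unfold J
  rw [if_pos (by omega), map_mul, map_natCast (C : RR n →+* PP n)]

lemma wt_bound {n : ℕ} (uvec : ℕ → RR n) :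
    ∀ (L : List ℤ) (u : ℕ) (h : ℤ) (p : PP n),
      (∀ j : ℕ, 0 < j → j < L.length → 0 ≤ h + (L.take j).sum) →
      wtT n uvec u h L p ≠ 0 →
      ((wdeg (wtT n uvec u h L p) : ℤ) ≤ (wdeg p : ℤ) + L.sum ∧
        ∀ j ≤ L.length, h + (L.take j).sum ≤ (wdeg p : ℤ) + (h + L.sum)) := by
  intro L
  induction L with
  | nil =>
    intro u h p _ _
    constructor
    · rw [wtT_nil]; simp
    · intro j hj
      have : j = 0 := Nat.le_zero.mp (by simpa using hj)
      subst this
      simp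
  | cons d rest ih =>
    intro u h p hint hw
    rw [wtT_cons] at hw ⊢
    have hqne : wtT n uvec (u + 1) (h + d) rest p ≠ 0 := by
      intro h0; rw [h0, opS_zero] at hw; exact hw rfl
    have hint' : ∀ j : ℕ, 0 < j → j < rest.length → 0 ≤ (h + d) + (rest.take j).sum := by
      intro j hj hjl
      have := hint (j + 1) (by omega) (by simp; omega)
      simpa [add_assoc] using this
    obtain ⟨ih1, ih2⟩ := ih (u + 1) (h + d) p hint' hqne
    set q := wtT n uvec (u + 1) (h + d) rest p with hq
    have key : (wdeg (opS uvec u h d q) : ℤ) ≤ (wdeg p : ℤ) + (d :: rest).sum := by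
      rcases lt_trichotomy d 0 with hd | rfl | hd
      · -- down step: derivative
        have hop : opS uvec u h d q
            = C (hb n * ((-d).toNat : RR n)) * pderiv (-d).toNat q := by
          unfold opS; rw [if_neg (by omega)]; exact J_down hd q
        rw [hop] at hw ⊢
        set m := (-d).toNat with hm
        have hpne : pderiv m q ≠ 0 := by
          intro h0; rw [h0, mul_zero] at hw; exact hw rfl
        obtain ⟨m0, hm0⟩ := Finset.nonempty_iff_ne_empty.mpr
          (fun he => hpne (MvPolynomial.support_eq_empty.mp he))
        have hmle : m ≤ wdeg q := le_trans (by omega) (wdeg_pderiv hm0)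
        have hd2 : wdeg (pderiv m q) ≤ wdeg q - m :=
          Finset.sup_le fun m' hm' => by have := wdeg_pderiv hm'; omega
        have hchain : wdeg (C (hb n * ((m : ℕ) : RR n)) * pderiv m q) ≤ wdeg q - m :=
          le_trans (wdeg_C_mul _ _) hd2
        have hmd : (m : ℤ) = -d := by rw [hm]; exact Int.toNat_of_nonneg (by omega)
        have : ((wdeg q - m : ℕ) : ℤ) = (wdeg q : ℤ) - m := by omega
        simp only [List.sum_cons]
        have := ih1
        omega
      · -- flat step
        have hop : opS uvec u h 0 q = C (uvec u - hb n * bb n * (h : RR n)) * q := by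
          unfold opS; rw [if_pos rfl]
        rw [hop]
        have := wdeg_C_mul (uvec u - hb n * bb n * (h : RR n)) q
        simp only [List.sum_cons]
        omega
      · -- up step: multiplication
        have hop : opS uvec u h d q = C (hb n) * (X d.toNat * q) := by
          unfold opS; rw [if_neg (by omega)]; exact J_up hd q
        rw [hop]
        have h1 := wdeg_C_mul (hb n) (X d.toNat * q)
        have h2 := wdeg_X_mul d.toNat q
        have hdt : (d.toNat : ℤ) = d := Int.toNat_of_nonneg (by omega)
        simp only [List.sum_cons]
        omega
    refine ⟨key, ?_⟩
    intro j hj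
    cases j with
    | zero =>
      simp only [List.take_zero, List.sum_nil, add_zero]
      have : (0 : ℤ) ≤ (wdeg (opS uvec u h d q) : ℤ) := by positivity
      simp only [List.sum_cons] at key ⊢
      omega
    | succ j' =>
      have hj' : j' ≤ rest.length := by simpa using hj
      have := ih2 j' hj'
      simp only [List.take_succ_cons, List.sum_cons]
      omega

/-! ### Path sets and bounded lists -/

/-- bridge-style set: endpoints free of sign conditions, final height `0`. -/
def BS (h : ℤ) (N : ℕ) : Set (List ℤ) :=
  {L | L.length = N ∧ h + L.sum = 0 ∧
    ∀ j : ℕ, 0 < j → j < N → 0 ≤ h + (L.take j).sum}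

/-- paths with all heights but the last nonnegative, final height `0`. -/
def PathNN (h : ℤ) (N : ℕ) : Set (List ℤ) :=
  {L | L.length = N ∧ h + L.sum = 0 ∧
    ∀ j : ℕ, j < N → 0 ≤ h + (L.take j).sum}

lemma PathNN_eq_BS {h : ℤ} (h0 : 0 ≤ h) (N : ℕ) : PathNN h N = BS h N := by
  ext L
  constructor
  · rintro ⟨h1, h2, h3⟩
    exact ⟨h1, h2, fun j hj hjN => h3 j hjN⟩
  · rintro ⟨h1, h2, h3⟩
    refine ⟨h1, h2, fun j hjN => ?_⟩
    rcases Nat.eq_zero_or_pos j with rfl | hj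
    · simpa using h0
    · exact h3 j hj hjN

lemma PathNN_empty {h : ℤ} (h0 : h < 0) (N : ℕ) : PathNN h N = ∅ := by
  ext L
  simp only [Set.mem_empty_iff_false, iff_false]
  rintro ⟨h1, h2, h3⟩
  rcases Nat.eq_zero_or_pos N with rfl | hN
  · have : L = [] := List.length_eq_zero_iff.mp h1
    subst this; simp at h2; omega
  · have := h3 0 hN
    simp at this; omega

lemma BS_cons {h d : ℤ} {r : List ℤ} {N : ℕ} :
    (d :: r) ∈ BS h (N + 1) ↔ r ∈ PathNN (h + d) N := by
  constructor
  · rintro ⟨h1, h2, h3⟩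
    refine ⟨by simpa using h1, by simp at h2; omega, fun j hj => ?_⟩
    have := h3 (j + 1) (by omega) (by omega)
    simpa [add_assoc] using this
  · rintro ⟨h1, h2, h3⟩
    refine ⟨by simpa using h1, by simp; omega, fun j hj hjN => ?_⟩
    obtain ⟨j', rfl⟩ : ∃ j', j = j' + 1 := ⟨j - 1, by omega⟩
    have := h3 j' (by omega)
    simpa [add_assoc] using this

lemma BridgeSet_eq_BS (N : ℕ) : BridgeSet (-1) ((N : ℤ) + 1) 0 = BS (-1) (N + 1) := by
  have htn : ((N : ℤ) + 1).toNat = N + 1 := by omega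
  ext L
  unfold BridgeSet PathSet BS
  simp only [Set.mem_setOf_eq, Set.mem_sep_iff, htn]
  constructor
  · rintro ⟨⟨h1, h2⟩, h3⟩
    exact ⟨h1, by omega, fun j hj hjN => h3 j hj (by omega)⟩
  · rintro ⟨h1, h2, h3⟩
    exact ⟨⟨h1, by omega⟩, fun j hj hjN => h3 j hj (by omega)⟩

/-- the finset of lists of length `N` with entries in `[-B, B]`. -/
def LB (B : ℤ) : ℕ → Finset (List ℤ)
  | 0 => {[]}
  | N + 1 => ((Finset.Icc (-B) B).sigma fun _ => LB B N).image fun x => x.1 :: x.2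

lemma mem_LB {B : ℤ} : ∀ {N : ℕ} {L : List ℤ},
    L ∈ LB B N ↔ L.length = N ∧ ∀ d ∈ L, -B ≤ d ∧ d ≤ B := by
  intro N
  induction N with
  | zero =>
    intro L
    simp only [LB, Finset.mem_singleton]
    constructor
    · rintro rfl; simp
    · rintro ⟨h1, _⟩; exact List.length_eq_zero_iff.mp h1
  | succ N ih =>
    intro L
    simp only [LB, Finset.mem_image, Finset.mem_sigma, Finset.mem_Icc]
    constructor
    · rintro ⟨⟨d, r⟩, ⟨hd, hr⟩, rfl⟩
      obtain ⟨hl, hmem⟩ := ih.mp hr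
      refine ⟨by simpa using hl, ?_⟩
      intro e he
      rcases List.mem_cons.mp he with rfl | he'
      · exact hd
      · exact hmem e he'
    · rintro ⟨h1, hmem⟩
      obtain ⟨d, r, rfl⟩ : ∃ d r, L = d :: r := by
        cases L with
        | nil => simp at h1
        | cons a b => exact ⟨a, b, rfl⟩
      refine ⟨⟨d, r⟩, ⟨hmem d (by simp), ih.mpr ⟨by simpa using h1, fun e he =>
        hmem e (by simp [he])⟩⟩, rfl⟩

/-- The master support lemma. -/
lemma support_master {n : ℕ} {uvec : ℕ → RR n} {u : ℕ} {h : ℤ} {N : ℕ} {L : List ℤ}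
    {p : PP n} (hh : -1 ≤ h) (hL : L ∈ BS h N) (hw : wtT n uvec u h L p ≠ 0) :
    L ∈ LB ((wdeg p : ℤ) + 1) N := by
  obtain ⟨h1, h2, h3⟩ := hL
  obtain ⟨_, hub⟩ := wt_bound uvec L u h p (fun j hj hjN => h3 j hj (h1 ▸ hjN)) hw
  -- all partial sums lie in [-1, wdeg p]
  have hps : ∀ j ≤ N, -1 ≤ h + (L.take j).sum ∧ h + (L.take j).sum ≤ (wdeg p : ℤ) := by
    intro j hj
    have hu := hub j (by omega)
    rw [h2] at hu
    constructor
    · rcases Nat.eq_zero_or_pos j with rfl | hj0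
      · simpa using hh
      · rcases Nat.lt_or_ge j N with hlt | hge
        · have := h3 j hj0 hlt; omega
        · have : j = N := by omega
          subst this
          rw [List.take_of_length_le (by omega)]
          omega
    · omega
  rw [mem_LB]
  refine ⟨h1, ?_⟩
  intro d hd
  obtain ⟨i, hi, hgi⟩ := List.mem_iff_getElem.mp hd
  have hsucc : (L.take (i + 1)).sum = (L.take i).sum + L[i] := by
    rw [List.sum_take_succ]
  have b1 := hps i (by omega)
  have b2 := hps (i + 1) (by omega)
  rw [hsucc, hgi] at b2
  omega

/-! ### Conversion of the locally finite sums to finite sums, and the peel lemma -/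

lemma core_BS {n : ℕ} (uvec : ℕ → RR n) (u : ℕ) {h : ℤ} (hh : -1 ≤ h) (N : ℕ) (p : PP n) :
    ∑ᶠ L ∈ BS h N, wtT n uvec u h L p
      = ∑ L ∈ LB ((wdeg p : ℤ) + 1) N,
          Set.indicator (BS h N) (fun L => wtT n uvec u h L p) L := by
  rw [finsum_mem_def]
  apply finsum_eq_sum_of_support_subset
  intro L hL
  simp only [Function.mem_support] at hL
  have hmem : L ∈ BS h N := by
    by_contra hc
    rw [Set.indicator_of_notMem hc] at hL
    exact hL rfl
  rw [Set.indicator_of_mem hmem] at hL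
  exact support_master hh hmem hL

lemma core_PathNN {n : ℕ} (uvec : ℕ → RR n) (u : ℕ) (h : ℤ) (N : ℕ) (p : PP n) :
    ∑ᶠ L ∈ PathNN h N, wtT n uvec u h L p
      = ∑ L ∈ LB ((wdeg p : ℤ) + 1) N,
          Set.indicator (PathNN h N) (fun L => wtT n uvec u h L p) L := by
  rcases le_or_gt 0 h with h0 | h0
  · rw [PathNN_eq_BS h0]
    exact core_BS uvec u (by omega) N p
  · rw [PathNN_empty h0]
    simp

lemma peel {n : ℕ} (uvec : ℕ → RR n) (u : ℕ) {h : ℤ} (hh : -1 ≤ h) (N : ℕ) (p : PP n) :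
    ∑ᶠ L ∈ BS h (N + 1), wtT n uvec u h L p
      = ∑ d ∈ Finset.Icc (-((wdeg p : ℤ) + 1)) ((wdeg p : ℤ) + 1),
          opS uvec u h d (∑ᶠ r ∈ PathNN (h + d) N, wtT n uvec (u + 1) (h + d) r p) := by
  rw [core_BS uvec u hh (N + 1) p]
  rw [Finset.sum_congr rfl (fun d _ => by
    rw [core_PathNN uvec (u + 1) (h + d) N p, opS_sum] :
    ∀ d ∈ Finset.Icc (-((wdeg p : ℤ) + 1)) ((wdeg p : ℤ) + 1),
      opS uvec u h d (∑ᶠ r ∈ PathNN (h + d) N, wtT n uvec (u + 1) (h + d) r p)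
      = ∑ r ∈ LB ((wdeg p : ℤ) + 1) N,
          opS uvec u h d (Set.indicator (PathNN (h + d) N)
            (fun L => wtT n uvec (u + 1) (h + d) L p) r))]
  rw [LB, Finset.sum_image (by rintro ⟨a, b⟩ _ ⟨c, e⟩ _ hce; simpa using hce),
    Finset.sum_sigma]
  apply Finset.sum_congr rfl
  intro d _
  apply Finset.sum_congr rfl
  intro r _
  by_cases hr : r ∈ PathNN (h + d) N
  · rw [Set.indicator_of_mem hr, Set.indicator_of_mem (BS_cons.mpr hr), wtT_cons]
  · rw [Set.indicator_of_notMem hr, Set.indicator_of_notMem (fun hc => hr (BS_cons.mp hc)),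
      opS_zero]

/-! ### Elementary symmetric polynomials in the `uvP` values -/

/-- `e_s` of the values `uvP (k+1), …, uvP (k+m)`. -/
def Ee (n k m s : ℕ) : RR n :=
  ∑ t ∈ Finset.powersetCard s (Finset.Icc (k + 1) (k + m)), ∏ j ∈ t, uvP n j

lemma Ee_zero (n k m : ℕ) : Ee n k m 0 = 1 := by
  unfold Ee
  rw [Finset.powersetCard_zero]
  simp

lemma Ee_top (n k : ℕ) {m s : ℕ} (h : m < s) : Ee n k m s = 0 := by
  unfold Ee
  rw [Finset.powersetCard_eq_empty.mpr (by rw [Nat.card_Icc]; omega)]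
  simp

lemma Ee_rec (n k m s : ℕ) :
    Ee n k (m + 1) (s + 1) = Ee n (k + 1) m (s + 1) + uvP n (k + 1) * Ee n (k + 1) m s := by
  unfold Ee
  have hicc : Finset.Icc (k + 1) (k + (m + 1))
      = insert (k + 1) (Finset.Icc (k + 1 + 1) (k + 1 + m)) := by
    ext x; simp only [Finset.mem_Icc, Finset.mem_insert]; omega
  have hnot : k + 1 ∉ Finset.Icc (k + 1 + 1) (k + 1 + m) := by
    simp only [Finset.mem_Icc]; omega
  rw [hicc, Finset.powersetCard_succ_insert hnot, Finset.sum_union, Finset.sum_image]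
  · congr 1
    rw [Finset.mul_sum]
    apply Finset.sum_congr rfl
    intro t ht
    have htn : k + 1 ∉ t := fun hc =>
      hnot ((Finset.mem_powersetCard.mp ht).1 hc)
    rw [Finset.prod_insert htn]
  · intro a ha b hb hab
    have ha' : k + 1 ∉ a := fun hc => hnot ((Finset.mem_powersetCard.mp ha).1 hc)
    have hb' : k + 1 ∉ b := fun hc => hnot ((Finset.mem_powersetCard.mp hb).1 hc)
    ext x
    constructor
    · intro hx
      have := hab ▸ Finset.mem_insert_of_mem (s := a) hx
      rcases Finset.mem_insert.mp this with rfl | h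
      · exact absurd hx ha'
      · exact h
    · intro hx
      have := hab.symm ▸ Finset.mem_insert_of_mem (s := b) hx
      rcases Finset.mem_insert.mp this with rfl | h
      · exact absurd hx hb'
      · exact h
  · -- disjointness
    rw [Finset.disjoint_left]
    intro t ht ht'
    obtain ⟨a, ha, rfl⟩ := Finset.mem_image.mp ht'
    have : k + 1 ∉ a := fun hc => hnot ((Finset.mem_powersetCard.mp ha).1 hc)
    have h1 := (Finset.mem_powersetCard.mp ht).1
    exact hnot (h1 (Finset.mem_insert_self _ _))

lemma esymP_eq (n s : ℕ) : esymP n s = Ee n 1 n s := by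
  unfold esymP Ee
  have hinj : Function.Injective (fun i : Fin n => (i : ℕ) + 2) := by
    intro a b hab
    simp only at hab
    exact Fin.ext (by omega)
  apply Finset.sum_bij (i := fun t _ => t.image fun i : Fin n => (i : ℕ) + 2)
  · intro t ht
    rw [Finset.mem_powersetCard] at ht ⊢
    constructor
    · intro j hj
      obtain ⟨i, _, rfl⟩ := Finset.mem_image.mp hj
      simp only [Finset.mem_Icc]
      omega
    · rw [Finset.card_image_of_injective _ hinj]
      exact ht.2
  · intro a _ b _ hab
    exact Finset.image_injective hinj hab
  · intro t' ht'
    rw [Finset.mem_powersetCard] at ht'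
    refine ⟨Finset.univ.filter (fun i : Fin n => (i : ℕ) + 2 ∈ t'), by
      rw [Finset.mem_powersetCard]
      refine ⟨Finset.subset_univ _, ?_⟩
      rw [← ht'.2]
      refine Finset.card_bij (fun i _ => (i : ℕ) + 2) ?_ ?_ ?_
      · intro i hi; simpa using (Finset.mem_filter.mp hi).2
      · intro a _ b _ hab; exact hinj hab
      · intro j hj
        have hjm := ht'.1 hj
        simp only [Finset.mem_Icc] at hjm
        refine ⟨⟨j - 2, by omega⟩, ?_, by simp; omega⟩
        simp only [Finset.mem_filter, Finset.mem_univ, true_and]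
        have : j - 2 + 2 = j := by omega
        simpa [this] using hj, ?_⟩
    ext j
    simp only [Finset.mem_image, Finset.mem_filter, Finset.mem_univ, true_and]
    constructor
    · rintro ⟨i, hi, rfl⟩; exact hi
    · intro hj
      have hjm := ht'.1 hj
      simp only [Finset.mem_Icc] at hjm
      refine ⟨⟨j - 2, by omega⟩, ?_, by simp; omega⟩
      have : j - 2 + 2 = j := by omega
      simpa [this] using hj
  · intro t ht
    rw [Finset.prod_image (fun a _ b _ h => hinj h)]
    apply Finset.prod_congr rfl
    intro i _
    unfold uvP
    rw [dif_pos ⟨by omega, by omega⟩]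
    congr 1

/-! ### The main path-identity lemma -/

/-- sum over nonneg paths with the zero weight vector -/
def A0f (n : ℕ) (h : ℤ) (i : ℕ) (p : PP n) : PP n :=
  ∑ᶠ L ∈ PathNN h i, wtT n (fun _ => 0) 1 h L p

/-- sum over nonneg paths with the `P` weight vector starting at position `k+1` -/
def AVf (n k : ℕ) (h : ℤ) (m : ℕ) (p : PP n) : PP n :=
  ∑ᶠ L ∈ PathNN h m, wtT n (uvP n) (k + 1) h L p

/-- the finite range of possible first steps -/
def DBp {n : ℕ} (p : PP n) : Finset ℤ :=
  Finset.Icc (-((wdeg p : ℤ) + 1)) ((wdeg p : ℤ) + 1)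

lemma zero_mem_DBp {n : ℕ} (p : PP n) : (0 : ℤ) ∈ DBp p := by
  simp only [DBp, Finset.mem_Icc]
  omega

lemma finsum_PathNN_zero {n : ℕ} (uvec : ℕ → RR n) (u : ℕ) (h : ℤ) (p : PP n) :
    ∑ᶠ L ∈ PathNN h 0, wtT n uvec u h L p = if h = 0 then p else 0 := by
  rcases eq_or_ne h 0 with rfl | hne
  · have : PathNN (0 : ℤ) 0 = {([] : List ℤ)} := by
      ext L
      constructor
      · rintro ⟨h1, _, _⟩; exact List.length_eq_zero_iff.mp h1
      · rintro rfl; exact ⟨rfl, by simp, by omega⟩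
    rw [this, finsum_mem_singleton, if_pos rfl, wtT_nil]
  · have : PathNN h 0 = ∅ := by
      ext L
      simp only [Set.mem_empty_iff_false, iff_false]
      rintro ⟨h1, h2, _⟩
      rw [List.length_eq_zero_iff.mp h1] at h2
      simp at h2; exact hne h2
    rw [this, finsum_mem_empty, if_neg hne]

lemma A0f_zero {n : ℕ} (h : ℤ) (p : PP n) : A0f n h 0 p = if h = 0 then p else 0 :=
  finsum_PathNN_zero _ _ _ _

lemma AVf_zero {n k : ℕ} (h : ℤ) (p : PP n) : AVf n k h 0 p = if h = 0 then p else 0 :=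
  finsum_PathNN_zero _ _ _ _

lemma A0f_neg {n : ℕ} {h : ℤ} (h0 : h < 0) (i : ℕ) (p : PP n) : A0f n h i p = 0 := by
  unfold A0f; rw [PathNN_empty h0, finsum_mem_empty]

lemma AVf_neg {n k : ℕ} {h : ℤ} (h0 : h < 0) (m : ℕ) (p : PP n) : AVf n k h m p = 0 := by
  unfold AVf; rw [PathNN_empty h0, finsum_mem_empty]

lemma A0f_peel {n : ℕ} {h : ℤ} (h0 : 0 ≤ h) (i : ℕ) (p : PP n) :
    A0f n h (i + 1) p
      = ∑ d ∈ DBp p, opS (fun _ => (0 : RR n)) 1 h d (A0f n (h + d) i p) := by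
  unfold A0f
  rw [PathNN_eq_BS h0, peel (fun _ => (0 : RR n)) 1 (by omega) i p]
  apply Finset.sum_congr rfl
  intro d _
  exact congrArg _ (finsum_mem_congr rfl fun r _ => congrFun (wtT_zero_u r (1 + 1) 1 (h + d)) p)

lemma AVf_peel {n k : ℕ} {h : ℤ} (h0 : 0 ≤ h) (m : ℕ) (p : PP n) :
    AVf n k h (m + 1) p
      = ∑ d ∈ DBp p, opS (uvP n) (k + 1) h d (AVf n (k + 1) (h + d) m p) := by
  unfold AVf
  rw [PathNN_eq_BS h0, peel (uvP n) (k + 1) (by omega) m p]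
  rfl

lemma swap_op {n : ℕ} (DB : Finset ℤ) (F : ℕ → RR n) (G : ℤ → ℕ → PP n)
    (uvec : ℕ → RR n) (u : ℕ) (h : ℤ) (m : ℕ) :
    ∑ i ∈ Finset.range m, C (F i) * ∑ d ∈ DB, opS uvec u h d (G d i)
      = ∑ d ∈ DB, opS uvec u h d (∑ i ∈ Finset.range m, C (F i) * G d i) := by
  have step1 : ∀ i ∈ Finset.range m, C (F i) * ∑ d ∈ DB, opS uvec u h d (G d i)
      = ∑ d ∈ DB, opS uvec u h d (C (F i) * G d i) := by
    intro i _
    rw [Finset.mul_sum]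
    exact Finset.sum_congr rfl fun d _ => (opS_C_mul uvec u h d (F i) (G d i)).symm
  rw [Finset.sum_congr rfl step1, Finset.sum_comm]
  exact Finset.sum_congr rfl fun d _ => (opS_sum uvec u h d _ _).symm

/-- **Main lemma**: the elementary-symmetric expansion of the weighted path sum. -/
lemma ML {n : ℕ} : ∀ (m k : ℕ) (h : ℤ) (p : PP n), 0 ≤ h →
    ∑ i ∈ Finset.range (m + 1), C (Ee n k m (m - i)) * A0f n h i p
      = AVf n k h m p := by
  intro m
  induction m with
  | zero =>
    intro k h p _
    rw [Finset.sum_range_one, Nat.sub_zero, Ee_zero, map_one, one_mul,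
      A0f_zero, AVf_zero]
  | succ m ih =>
    intro k h p h0
    -- IH applied at every shifted height
    have key : ∀ d : ℤ,
        ∑ i ∈ Finset.range (m + 1), C (Ee n (k + 1) m (m - i)) * A0f n (h + d) i p
          = AVf n (k + 1) (h + d) m p := by
      intro d
      rcases le_or_gt 0 (h + d) with hd | hd
      · exact ih (k + 1) (h + d) p hd
      · rw [AVf_neg hd]
        apply Finset.sum_eq_zero
        intro i _
        rw [A0f_neg hd, mul_zero]
    -- split the top (i = m+1) term and apply the `Ee` recursion
    have hsplit : ∀ i ∈ Finset.range (m + 1),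
        C (Ee n k (m + 1) (m + 1 - i)) * A0f n h i p
          = C (Ee n (k + 1) m (m + 1 - i)) * A0f n h i p
            + C (uvP n (k + 1)) * (C (Ee n (k + 1) m (m - i)) * A0f n h i p) := by
      intro i hi
      have hmi : m + 1 - i = (m - i) + 1 := by
        simp only [Finset.mem_range] at hi; omega
      rw [hmi, Ee_rec, map_add, map_mul, add_mul]
      ring
    rw [Finset.sum_range_succ, Finset.sum_congr rfl hsplit]
    rw [Finset.sum_add_distrib, ← Finset.mul_sum, ih (k + 1) h p h0]
    have hlast : Ee n k (m + 1) (m + 1 - (m + 1)) = Ee n (k + 1) m (m + 1 - (m + 1)) := by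
      rw [Nat.sub_self, Ee_zero, Ee_zero]
    rw [hlast, add_right_comm,
      ← Finset.sum_range_succ (fun x => C (Ee n (k + 1) m (m + 1 - x)) * A0f n h x p)]
    rw [Finset.sum_range_succ']
    have hEtop : Ee n (k + 1) m (m + 1 - 0) = 0 := Ee_top n (k + 1) (by omega)
    rw [hEtop, map_zero, zero_mul, add_zero]
    have hA : ∑ i ∈ Finset.range (m + 1), C (Ee n (k + 1) m (m + 1 - (i + 1))) * A0f n h (i + 1) p
        = ∑ i ∈ Finset.range (m + 1), C (Ee n (k + 1) m (m - i)) *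
            ∑ d ∈ DBp p, opS (fun _ => (0 : RR n)) 1 h d (A0f n (h + d) i p) := by
      apply Finset.sum_congr rfl
      intro i hi
      rw [show m + 1 - (i + 1) = m - i from by omega, A0f_peel h0 i p]
    rw [hA]
    rw [swap_op (DBp p) (fun i => Ee n (k + 1) m (m - i))
      (fun d i => A0f n (h + d) i p) (fun _ => (0 : RR n)) 1 h (m + 1)]
    have hK : ∑ d ∈ DBp p, opS (fun _ => (0 : RR n)) 1 h d
          (∑ i ∈ Finset.range (m + 1), C (Ee n (k + 1) m (m - i)) * A0f n (h + d) i p)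
        = ∑ d ∈ DBp p, opS (fun _ => (0 : RR n)) 1 h d (AVf n (k + 1) (h + d) m p) := by
      apply Finset.sum_congr rfl
      intro d _
      rw [key d]
    rw [hK]
    rw [AVf_peel h0 m p]
    rw [← Finset.add_sum_erase _ _ (zero_mem_DBp p),
      ← Finset.add_sum_erase _ (fun d => opS (uvP n) (k + 1) h d (AVf n (k + 1) (h + d) m p))
        (zero_mem_DBp p)]
    have herase : ∑ d ∈ (DBp p).erase 0,
        opS (fun _ => (0 : RR n)) 1 h d (AVf n (k + 1) (h + d) m p)
          = ∑ d ∈ (DBp p).erase 0,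
        opS (uvP n) (k + 1) h d (AVf n (k + 1) (h + d) m p) := by
      apply Finset.sum_congr rfl
      intro d hd
      rw [opS_ne (fun _ => (0 : RR n)) (uvP n) 1 (k + 1) h (Finset.ne_of_mem_erase hd)]
    rw [herase]
    have hflat : ∀ (uvec : ℕ → RR n) (u : ℕ) (q : PP n),
        opS uvec u h 0 q = C (uvec u - hb n * bb n * (h : RR n)) * q := by
      intro uvec u q; unfold opS; rw [if_pos rfl]
    rw [add_right_comm, hflat, hflat, add_zero]
    simp only [map_sub, map_mul, map_zero, zero_sub, map_neg, zero_mul]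
    ring

lemma uvP_one (n : ℕ) : uvP n 1 = 0 := by
  unfold uvP
  rw [dif_neg (by omega : ¬(2 ≤ 1 ∧ 1 ≤ n + 1))]

/-- **Theorem (P-part of the path identity, used for Theorem 2.5 of the paper).**
For `R = ℚ[ℏ,𝔟,P_1,…,P_n]`, the identity of `R`-linear operators on `R[p̃]`
`Σ_{i=0}^{n} e_{n−i}(P) · Σ_{γ ∈ Γ^{≥0}_{(0,−1)→(i+1,0)}} wt̃(γ|0)
  = Σ_{γ ∈ Γ^{≥0}_{(0,−1)→(n+1,0)}} wt̃(γ|(0,P_1,…,P_n))`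
holds, and every sum over a bridge set is locally finite. -/
theorem stmt1 (n : ℕ) :
    (∀ p : PP n, ∀ i : ℕ, i ≤ n →
        {L ∈ BridgeSet (-1) (i + 1) 0 | wtT n (fun _ => 0) 1 (-1) L p ≠ 0}.Finite) ∧
    (∀ p : PP n,
        {L ∈ BridgeSet (-1) (n + 1) 0 | wtT n (uvP n) 1 (-1) L p ≠ 0}.Finite) ∧
    (∀ p : PP n,
        ∑ i ∈ Finset.range (n + 1),
            C (esymP n (n - i)) *
              ∑ᶠ L ∈ BridgeSet (-1) (i + 1) 0, wtT n (fun _ => 0) 1 (-1) L p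
          = ∑ᶠ L ∈ BridgeSet (-1) (n + 1) 0, wtT n (uvP n) 1 (-1) L p) := by
  have hfin : ∀ (uvec : ℕ → RR n) (p : PP n) (N : ℕ),
      {L ∈ BridgeSet (-1) ((N : ℤ) + 1) 0 | wtT n uvec 1 (-1) L p ≠ 0}.Finite := by
    intro uvec p N
    apply Set.Finite.subset (LB ((wdeg p : ℤ) + 1) (N + 1)).finite_toSet
    rintro L ⟨hL, hw⟩
    rw [BridgeSet_eq_BS N] at hL
    exact support_master (by omega) hL hw
  refine ⟨fun p i _ => hfin _ p i, fun p => hfin _ p n, fun p => ?_⟩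
  -- peel the first step of each bridge sum
  have hbr0 : ∀ N : ℕ,
      ∑ᶠ L ∈ BridgeSet (-1) ((N : ℤ) + 1) 0, wtT n (fun _ => (0 : RR n)) 1 (-1) L p
        = ∑ d ∈ DBp p, opS (fun _ => (0 : RR n)) 1 (-1) d (A0f n (-1 + d) N p) := by
    intro N
    rw [BridgeSet_eq_BS N, peel (fun _ => (0 : RR n)) 1 (by omega) N p]
    apply Finset.sum_congr rfl
    intro d _
    exact congrArg _ (finsum_mem_congr rfl fun r _ =>
      congrFun (wtT_zero_u r (1 + 1) 1 (-1 + d)) p)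
  have hbrV :
      ∑ᶠ L ∈ BridgeSet (-1) ((n : ℤ) + 1) 0, wtT n (uvP n) 1 (-1) L p
        = ∑ d ∈ DBp p, opS (uvP n) 1 (-1) d (AVf n 1 (-1 + d) n p) := by
    rw [BridgeSet_eq_BS n, peel (uvP n) 1 (by omega) n p]
    rfl
  rw [hbrV]
  have hL1 : ∑ i ∈ Finset.range (n + 1),
        C (esymP n (n - i)) *
          ∑ᶠ L ∈ BridgeSet (-1) ((i : ℤ) + 1) 0, wtT n (fun _ => (0 : RR n)) 1 (-1) L p
      = ∑ i ∈ Finset.range (n + 1), C (Ee n 1 n (n - i)) *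
          ∑ d ∈ DBp p, opS (fun _ => (0 : RR n)) 1 (-1) d (A0f n (-1 + d) i p) :=
    Finset.sum_congr rfl fun i _ => by rw [esymP_eq, hbr0 i]
  rw [hL1, swap_op (DBp p) (fun i => Ee n 1 n (n - i))
    (fun d i => A0f n (-1 + d) i p) (fun _ => (0 : RR n)) 1 (-1) (n + 1)]
  apply Finset.sum_congr rfl
  intro d _
  have hinner : ∑ i ∈ Finset.range (n + 1), C (Ee n 1 n (n - i)) * A0f n (-1 + d) i p
      = AVf n 1 (-1 + d) n p := by
    rcases le_or_gt 0 (-1 + d) with hd | hd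
    · exact ML n 1 (-1 + d) p hd
    · rw [AVf_neg hd]
      apply Finset.sum_eq_zero
      intro i _
      rw [A0f_neg hd, mul_zero]
  rw [hinner]
  rcases eq_or_ne d 0 with rfl | hd
  · unfold opS
    rw [if_pos rfl, if_pos rfl, uvP_one]
  · rw [opS_ne (fun _ => (0 : RR n)) (uvP n) 1 1 (-1) hd]

end Stmt1
end
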